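/- Let g = sl_{n+1}(ℂ) and let k ∈ ℚ be an admissible number for g. Let λ ∈ Pr̄_k and μ ∈ W·λ. Then μ ∈ Pr̄_k if and only if μ = w^{-1}·λ for some element w ∈ W^λ, where W^λ = {w ∈ W : Δ_+ ∩ w(−Δ_+) ⊆ Δ_+ \ Δ(λ)} and Δ(λ) = {α ∈ Δ : ⟨λ+ρ,α^∨⟩ ∈ ℤ} is the integral root system of λ. -/

import Mathlib

/-!
Combinatorial model for the paper "Admissible representations of simple affine
vertex algebras" for `g = sl_{n+1}(ℂ)`.

* `Weight n` models `h*` (linear functionals on diagonal matrices; every notion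
  used below depends only on differences of coordinates, hence is well defined
  on the honest `h*`, the quotient by the constants).
* `Weyl n` is the Weyl group `S_{n+1}` of `sl_{n+1}`.
* `Root n` is the root system: pairs `(i,j)`, `i ≠ j`, representing `ε_i - ε_j`.
-/

namespace PaperSL

noncomputable section

abbrev Weight (n : ℕ) := Fin (n + 1) → ℂ

abbrev Weyl (n : ℕ) := Equiv.Perm (Fin (n + 1))

structure Root (n : ℕ) where
  i : Fin (n + 1)
  j : Fin (n + 1)
  ne : i ≠ j

variable {n : ℕ}

/-- the pairing `⟨μ, α^∨⟩` for `α = ε_i - ε_j`. -/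
def rpair (μ : Weight n) (α : Root n) : ℂ := μ α.i - μ α.j

/-- `α` is a positive root (w.r.t. the standard Borel subalgebra). -/
def Root.IsPos (α : Root n) : Prop := α.i < α.j

/-- (a representative of) the Weyl vector `ρ`:  `⟨ρ, α^∨⟩ = 1` for simple `α`. -/
def rho (n : ℕ) : Weight n := fun i => -((i : ℕ) : ℂ)

/-- action of the Weyl group on weights. -/
def wAct (w : Weyl n) (μ : Weight n) : Weight n := fun i => μ (w⁻¹ i)

/-- action of the Weyl group on roots. -/
def rAct (w : Weyl n) (α : Root n) : Root n :=
  ⟨w α.i, w α.j, fun h => α.ne (w.injective h)⟩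

/-- the dot action `w · λ = w(λ + ρ) - ρ`. -/
def dot (w : Weyl n) (μ : Weight n) : Weight n := wAct w (μ + rho n) - rho n

/-- `z ∈ ℤ ⊆ ℂ`. -/
def IsInt (z : ℂ) : Prop := ∃ m : ℤ, z = (m : ℂ)

/-- `z ∈ ℕ₀ = {0,1,2,…} ⊆ ℂ`. -/
def IsNat (z : ℂ) : Prop := ∃ m : ℕ, z = (m : ℂ)

/-- `z ∈ ℕ = {1,2,…} ⊆ ℂ`. -/
def IsPosInt (z : ℂ) : Prop := ∃ m : ℕ, z = (m : ℂ) + 1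

/-- `μ` is dominant: `⟨μ + ρ, α^∨⟩ ∉ -ℕ` for all positive roots `α`. -/
def IsDominant (μ : Weight n) : Prop :=
  ∀ α : Root n, α.IsPos → ¬ IsPosInt (-(rpair (μ + rho n) α))

/-- the simple root `α_{r+1} = ε_r - ε_{r+1}` (`0`-indexed). -/
def simple (r : Fin n) : Root n :=
  ⟨r.castSucc, r.succ, by
    simp only [ne_eq, Fin.ext_iff, Fin.coe_castSucc, Fin.val_succ]
    omega⟩

/-- the simple reflection `s_{α_{r+1}}`, i.e. the transposition `(r, r+1)`. -/
def srefl (r : Fin n) : Weyl n := Equiv.swap r.castSucc r.succ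

/-- (a representative of) the fundamental weight `ω_{r+1}` (`0`-indexed). -/
def fw (r : Fin n) : Weight n := fun i => if (i : ℕ) ≤ (r : ℕ) then 1 else 0

/-- the root `-θ`, the negative of the highest root `θ = ε_0 - ε_n`. -/
def negTheta (hn : 0 < n) : Root n :=
  ⟨Fin.last n, 0, by
    simp only [ne_eq, Fin.ext_iff, Fin.val_last, Fin.val_zero]
    omega⟩

/-! Real affine roots `α + mδ` of `ŝl_{n+1}`, modeled as pairs `(α, m)`. -/

abbrev ARoot (n : ℕ) := Root n × ℤ

/-- positivity of real affine roots. -/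
def ARoot.IsPos (β : ARoot n) : Prop := 0 < β.2 ∨ (β.2 = 0 ∧ β.1.IsPos)

/-- `⟨λ + kΛ₀ + ρ̂, (α + mδ)^∨⟩ = ⟨λ + ρ, α^∨⟩ + m(k + h^∨)`, `h^∨ = n + 1`. -/
def apair (k : ℚ) (μ : Weight n) (β : ARoot n) : ℂ :=
  rpair (μ + rho n) β.1 + (β.2 : ℂ) * ((k : ℂ) + (n : ℂ) + 1)

/-- the integral root system `Δ̂(λ + kΛ₀)`. -/
def aIntegral (k : ℚ) (μ : Weight n) : Set (ARoot n) := {β | IsInt (apair k μ β)}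

/-- `λ + kΛ₀` is regular dominant: `⟨λ + kΛ₀ + ρ̂, β^∨⟩ ∉ -ℕ₀` for positive `β`. -/
def IsRegDominantAff (k : ℚ) (μ : Weight n) : Prop :=
  ∀ β : ARoot n, ARoot.IsPos β → ¬ IsNat (-(apair k μ β))

/-- a real affine root as a rational vector (finite part, coefficient of `δ`). -/
def ARoot.vec (β : ARoot n) : (Fin (n + 1) → ℚ) × ℚ :=
  (fun t => (if t = β.1.i then 1 else 0) - (if t = β.1.j then 1 else 0), (β.2 : ℚ))

/-- the `ℚ`-span of `Δ̂(λ + kΛ₀)` contains all real affine roots. -/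
def SpanFull (k : ℚ) (μ : Weight n) : Prop :=
  ∀ β : ARoot n, ARoot.vec β ∈ Submodule.span ℚ (ARoot.vec '' aIntegral k μ)

/-- `λ + kΛ₀` is an admissible weight (Kac–Wakimoto). -/
def IsAdmissibleWeight (k : ℚ) (μ : Weight n) : Prop :=
  IsRegDominantAff k μ ∧ SpanFull k μ

/-- the action of `w t_{-η}` (a general element of the extended affine Weyl group
`W̃ = W ⋉ P^∨`) on real affine roots: `w t_{-η}(α + mδ) = w(α) + (m + (η,α))δ`.
A coweight `η ∈ P^∨` is modeled by an integer-valued function on coordinates. -/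
def aAct (w : Weyl n) (η : Fin (n + 1) → ℤ) (β : ARoot n) : ARoot n :=
  (rAct w β.1, β.2 + (η β.1.i - η β.1.j))

/-- `Pr̄_k`: the projections to `h*` of the admissible weights `λ` of level `k`
with `Δ̂(λ) = y(Δ̂(kΛ₀))` for some `y ∈ W̃`. -/
def Pr (n : ℕ) (k : ℚ) : Set (Weight n) :=
  {μ | IsAdmissibleWeight k μ ∧
    ∃ (w : Weyl n) (η : Fin (n + 1) → ℤ),
      aIntegral k μ = aAct w η '' aIntegral k (0 : Weight n)}

/-- `k` is an admissible number for `sl_{n+1}` with numerator `p`, denominator `q`: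
`k + n + 1 = p/q`, `p,q ∈ ℕ`, `(p,q) = 1`, `p ≥ n+1`. -/
def IsAdmissibleNum (n : ℕ) (k : ℚ) (p q : ℕ) : Prop :=
  0 < p ∧ 0 < q ∧ Nat.Coprime p q ∧ n + 1 ≤ p ∧ (k + (n : ℚ) + 1) = (p : ℚ) / (q : ℚ)

/-- `k` is an admissible number for `sl_{n+1}`. -/
def IsAdmissible (n : ℕ) (k : ℚ) : Prop := ∃ p q : ℕ, IsAdmissibleNum n k p q

/-- the integral root system `Δ(λ) = {α ∈ Δ : ⟨λ+ρ, α^∨⟩ ∈ ℤ}`. -/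
def fIntegral (μ : Weight n) : Set (Root n) := {α | IsInt (rpair (μ + rho n) α)}

/-- the root subsystem `Δ_Σ` generated by a subset `Σ` of the simple roots
(a standard parabolic subalgebra is modeled by its set `Σ` of simple roots). -/
def DeltaSigma (Sg : Finset (Fin n)) : Set (Root n) :=
  {α | ∀ t : Fin n, min (α.i : ℕ) (α.j : ℕ) ≤ (t : ℕ) →
    (t : ℕ) < max (α.i : ℕ) (α.j : ℕ) → t ∈ Sg}

/-- `W^λ` resp. `W^p`: `{w ∈ W : Δ₊ ∩ w(-Δ₊) ⊆ Δ₊ \ S}` for `S = Δ(λ)` resp. `Δ_Σ`. -/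
def WSet (S : Set (Root n)) : Set (Weyl n) :=
  {w | ∀ α : Root n, α.IsPos → ¬ (rAct w⁻¹ α).IsPos → α ∉ S}

/-- `Pr̄_{k,ℤ} = {λ : ⟨λ, α_i^∨⟩ ∈ ℕ₀ ∀ i, ⟨λ, θ^∨⟩ ≤ p - n - 1}`, `p = (k+n+1)q`. -/
def PrZ (n p : ℕ) : Set (Weight n) :=
  {μ | (∀ r : Fin n, IsNat (rpair μ (simple r))) ∧
    ∃ m : ℕ, μ 0 - μ (Fin.last n) = (m : ℂ) ∧ m + (n + 1) ≤ p}

/-- `(η, α)` for a coweight `η` and a root `α`. -/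
def cpair (η : Fin (n + 1) → ℤ) (α : Root n) : ℤ := η α.i - η α.j

/-- `η ∈ P₊^∨` (dominant coweight). -/
def IsDomCoweight (η : Fin (n + 1) → ℤ) : Prop := ∀ r : Fin n, η r.succ ≤ η r.castSucc

/-- `(η, θ)` for the highest root `θ`. -/
def cTheta (η : Fin (n + 1) → ℤ) : ℤ := η 0 - η (Fin.last n)

/-- `Π^η = {α ∈ Π : (η, α) = 0}`. -/
def PiEta (η : Fin (n + 1) → ℤ) : Finset (Fin n) :=
  Finset.univ.filter fun r => η r.castSucc = η r.succ

/-- a coweight regarded as an element of `h*` (via the normalized bilinear form). -/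
def coToW (η : Fin (n + 1) → ℤ) : Weight n := fun i => ((η i : ℤ) : ℂ)

/-- `Λ_k(p) = {λ - (k+n+1)η : λ ∈ Pr̄_{k,ℤ}, η ∈ P₊^∨, (η,θ) ≤ q-1, Π^η = Σ_p}`. -/
def Lam (n : ℕ) (k : ℚ) (p q : ℕ) (Sg : Finset (Fin n)) : Set (Weight n) :=
  {ν | ∃ μ ∈ PrZ n p, ∃ η : Fin (n + 1) → ℤ,
    IsDomCoweight η ∧ cTheta η ≤ (q : ℤ) - 1 ∧ PiEta η = Sg ∧
    ν = μ - ((k : ℂ) + (n : ℂ) + 1) • coToW η}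

/-- the saturation of a set of weights under the dot action of `W`; the image of
`S` in the quotient `[Pr̄_k] = Pr̄_k/∼` is faithfully encoded by `dotOrbitSat S`. -/
def dotOrbitSat (S : Set (Weight n)) : Set (Weight n) :=
  {ν | ∃ μ ∈ S, ∃ w : Weyl n, ν = dot w μ}

/-- the set `{α_1, …, α_n, -θ}`. -/
def extSet (hn : 0 < n) : Set (Root n) := Set.range simple ∪ {negTheta hn}

/-- `w = w_j`: the unique element of `W` preserving `{α_1,…,α_n,-θ}` with
`w(-θ) = α_j` (here `j : Fin n` is `0`-indexed). -/
def IsWj (hn : 0 < n) (w : Weyl n) (j : Fin n) : Prop :=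
  rAct w '' extSet hn = extSet hn ∧ rAct w (negTheta hn) = simple j

/-- the subgroup `W₊ = ⟨w_1, …, w_n⟩` of `W`. -/
def WPlus (hn : 0 < n) : Subgroup (Weyl n) :=
  Subgroup.closure {w | ∃ j : Fin n, IsWj hn w j}

/-- `w(Σ_p) = Σ_p` as sets of simple roots. -/
def fixesSigma (w : Weyl n) (Sg : Finset (Fin n)) : Prop :=
  rAct w '' (simple '' (Sg : Set (Fin n))) = simple '' (Sg : Set (Fin n))

/-- `W₊^p = {w ∈ W₊ : w(Σ_p) = Σ_p}`. -/
def WPlusP (hn : 0 < n) (Sg : Finset (Fin n)) : Set (Weyl n) :=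
  {w | w ∈ WPlus hn ∧ fixesSigma w Sg}

/-- `p_{Σ₁} ∼ p_{Σ₂}`: the root subsystems `Δ_{Σ₁}` and `Δ_{Σ₂}` are `W`-conjugate. -/
def DeltaConj (S1 S2 : Finset (Fin n)) : Prop :=
  ∃ w : Weyl n, DeltaSigma S1 = rAct w '' DeltaSigma S2

/-! Partitions (as multisets), Richardson orbits. -/

/-- the cut positions of the Levi blocks of the parabolic with simple roots `Σ`. -/
def cuts (Sg : Finset (Fin n)) : Finset ℕ :=
  insert 0 (insert (n + 1) ((Finset.univ \ Sg).image fun r : Fin n => (r : ℕ) + 1))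

/-- the block sizes of the Levi subalgebra of the parabolic with simple roots `Σ`
(a partition of `n+1`). -/
def blockSizes (Sg : Finset (Fin n)) : Multiset ℕ :=
  (((((cuts Sg).sort (· ≤ ·)).zip ((cuts Sg).sort (· ≤ ·)).tail).map
    fun ab => ab.2 - ab.1 : List ℕ) : Multiset ℕ)

/-- the transpose of a partition given as a multiset. -/
def transposeM (μ : Multiset ℕ) : Multiset ℕ :=
  Multiset.filter (fun c => 0 < c)
    (((List.range μ.sum).map fun j =>
      Multiset.card (μ.filter fun x => j + 1 ≤ x) : List ℕ) : Multiset ℕ)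

/-- the partition of the Richardson orbit `O_{p_Σ}` attached to the standard
parabolic subalgebra with simple roots `Σ`: the transpose of the Levi block sizes. -/
def richardson (Sg : Finset (Fin n)) : Multiset ℕ := transposeM (blockSizes Sg)

/-- the set `Σ_μ` of simple roots of the standard parabolic subalgebra `p_μ`
attached to a partition `μ` of `n+1`: the complement of the partial sums of the
(decreasingly ordered) parts. -/
def sigmaOfPartition (μ : Multiset ℕ) : Finset (Fin n) :=
  Finset.univ.filter fun r : Fin n =>
    ((r : ℕ) + 1) ∉ List.scanl (· + ·) 0 (μ.sort (· ≤ ·)).reverse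

/-- the length function on `W = S_{n+1}` (number of inversions). -/
def len (w : Weyl n) : ℕ :=
  (Finset.univ.filter fun pr : Fin (n + 1) × Fin (n + 1) =>
    pr.1 < pr.2 ∧ w pr.2 < w pr.1).card

/-- the coefficients in `w_j(∑ λ_i ω_i) = ∑_{i<j} λ_{n+1+i-j} ω_i - (∑ λ_i) ω_j
+ ∑_{i>j} λ_{i-j} ω_i` (all `0`-indexed). -/
def twCoeff (lamb : Fin n → ℂ) (j i : Fin n) : ℂ :=
  if _ : (i : ℕ) < (j : ℕ) then
    lamb ⟨n + (i : ℕ) - (j : ℕ), by have := j.isLt; omega⟩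
  else if (i : ℕ) = (j : ℕ) then -(∑ t, lamb t)
  else lamb ⟨(i : ℕ) - (j : ℕ) - 1, by have := i.isLt; omega⟩

/-! ### Auxiliary lemmas for Statement 1 -/

/-- the negative of a root. -/
def rneg (α : Root n) : Root n := ⟨α.j, α.i, α.ne.symm⟩

lemma Root.ext' {α β : Root n} (h1 : α.i = β.i) (h2 : α.j = β.j) : α = β := by
  cases α; cases β; simp_all

lemma rAct_inv_rAct (v : Weyl n) (α : Root n) : rAct v⁻¹ (rAct v α) = α :=
  Root.ext' (Equiv.symm_apply_apply v α.i) (Equiv.symm_apply_apply v α.j)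

lemma rAct_rAct_inv (v : Weyl n) (α : Root n) : rAct v (rAct v⁻¹ α) = α :=
  Root.ext' (Equiv.apply_symm_apply v α.i) (Equiv.apply_symm_apply v α.j)

lemma rAct_rneg (w : Weyl n) (α : Root n) : rAct w (rneg α) = rneg (rAct w α) := rfl

lemma isPos_rneg_of_not {α : Root n} (h : ¬ α.IsPos) : (rneg α).IsPos :=
  lt_of_le_of_ne (not_lt.1 h) α.ne.symm

lemma not_isPos_rneg {α : Root n} (h : α.IsPos) : ¬ (rneg α).IsPos := asymm h

lemma rpair_rneg (μ : Weight n) (α : Root n) : rpair μ (rneg α) = - rpair μ α := by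
  simp [rpair, rneg]

lemma rpair_wAct (v : Weyl n) (μ : Weight n) (α : Root n) :
    rpair (wAct v μ) α = rpair μ (rAct v⁻¹ α) := rfl

lemma dot_add_rho (v : Weyl n) (μ : Weight n) :
    dot v μ + rho n = wAct v (μ + rho n) := by
  funext i; simp [dot]

lemma apair_dot (k : ℚ) (v : Weyl n) (μ : Weight n) (β : ARoot n) :
    apair k (dot v μ) β = apair k μ (rAct v⁻¹ β.1, β.2) := by
  simp only [apair, dot_add_rho, rpair_wAct]

lemma apair_zero (k : ℚ) (μ : Weight n) (α : Root n) :
    apair k μ (α, 0) = rpair (μ + rho n) α := by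
  simp [apair]

lemma aAct_aAct (v w : Weyl n) (η : Fin (n + 1) → ℤ) (β : ARoot n) :
    aAct v 0 (aAct w η β) = aAct (v * w) η β := by
  simp [aAct, rAct]

lemma aAct_zero_pair (v : Weyl n) (β : ARoot n) :
    aAct v 0 (rAct v⁻¹ β.1, β.2) = β := by
  cases β with
  | mk α m => simp [aAct, rAct_rAct_inv]

lemma aAct_zero_pair' (v : Weyl n) (β : ARoot n) :
    (rAct v⁻¹ (aAct v 0 β).1, (aAct v 0 β).2) = β := by
  cases β with
  | mk α m => simp [aAct, rAct_inv_rAct]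

lemma aIntegral_dot (k : ℚ) (v : Weyl n) (μ : Weight n) :
    aIntegral k (dot v μ) = aAct v 0 '' aIntegral k μ := by
  ext β
  constructor
  · intro h
    refine ⟨(rAct v⁻¹ β.1, β.2), ?_, aAct_zero_pair v β⟩
    have : IsInt (apair k (dot v μ) β) := h
    rwa [apair_dot] at this
  · rintro ⟨x, hx, rfl⟩
    show IsInt (apair k (dot v μ) (aAct v 0 x))
    rw [apair_dot, aAct_zero_pair']
    exact hx
lemma aAct_one (β : ARoot n) : aAct (1 : Weyl n) 0 β = β := by
  cases β with
  | mk α m =>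
    cases α with
    | mk i j ne => simp [aAct, rAct]

lemma vec_aAct_zero (v : Weyl n) (β : ARoot n) :
    ARoot.vec (aAct v 0 β) =
      ((LinearMap.funLeft ℚ ℚ ⇑v⁻¹).prodMap (LinearMap.id : ℚ →ₗ[ℚ] ℚ)) (ARoot.vec β) := by
  cases β with
  | mk α m =>
    refine Prod.ext ?_ (by simp [ARoot.vec, aAct])
    funext t
    simp only [ARoot.vec, aAct, rAct, LinearMap.prodMap_apply, LinearMap.funLeft_apply,
      LinearMap.id_apply]
    have h1 : (t = v α.i) ↔ (v⁻¹ t = α.i) := (Equiv.symm_apply_eq v).symm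
    have h2 : (t = v α.j) ↔ (v⁻¹ t = α.j) := (Equiv.symm_apply_eq v).symm
    simp [h1, h2]

lemma spanFull_dot (k : ℚ) (v : Weyl n) (μ : Weight n) (h : SpanFull k μ) :
    SpanFull k (dot v μ) := by
  intro β
  set L := ((LinearMap.funLeft ℚ ℚ ⇑v⁻¹).prodMap (LinearMap.id : ℚ →ₗ[ℚ] ℚ)) with hL
  have hβ : ARoot.vec β = L (ARoot.vec (aAct v⁻¹ 0 β)) := by
    rw [← vec_aAct_zero, aAct_aAct, mul_inv_cancel, aAct_one]
  have key : ARoot.vec '' aIntegral k (dot v μ) = L '' (ARoot.vec '' aIntegral k μ) := by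
    rw [aIntegral_dot]
    simp only [Set.image_image, vec_aAct_zero]
    rfl
  rw [key, hβ]
  exact Submodule.apply_mem_span_image_of_mem_span L (h _)
lemma isNat_of_integral {k : ℚ} {μ : Weight n} (hRd : IsRegDominantAff k μ)
    {α : Root n} (hpos : α.IsPos) (hint : IsInt (rpair (μ + rho n) α)) :
    IsNat (rpair (μ + rho n) α) := by
  obtain ⟨m, hm⟩ := hint
  have hnot := hRd (α, 0) (Or.inr ⟨rfl, hpos⟩)
  rw [apair_zero, hm] at hnot
  by_cases h : 0 ≤ m
  · exact ⟨m.toNat, by rw [hm]; norm_cast; omega⟩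
  · exact absurd ⟨(-m).toNat, by norm_cast; omega⟩ hnot

lemma rd_dot_iff (k : ℚ) (lam : Weight n) (hRd : IsRegDominantAff k lam) (v : Weyl n) :
    IsRegDominantAff k (dot v lam) ↔
      ∀ α : Root n, α.IsPos → ¬ (rAct v α).IsPos → α ∉ fIntegral lam := by
  constructor
  · intro hRdmu α hpos hneg hint
    obtain ⟨t, ht⟩ := isNat_of_integral hRd hpos hint
    have h2 := hRdmu (rneg (rAct v α), 0) (Or.inr ⟨rfl, isPos_rneg_of_not hneg⟩)
    rw [apair_dot] at h2
    have hroot : rAct v⁻¹ (rneg (rAct v α)) = rneg α := by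
      rw [rAct_rneg, rAct_inv_rAct]
    rw [hroot, apair_zero, rpair_rneg] at h2
    exact h2 ⟨t, by rw [neg_neg, ht]⟩
  · intro hcond β hβpos
    obtain ⟨α, m⟩ := β
    rw [apair_dot]
    rcases hβpos with hm | ⟨hm, hpos⟩
    · exact hRd _ (Or.inl hm)
    · simp only at hm
      subst hm
      by_cases hp : (rAct v⁻¹ α).IsPos
      · exact hRd _ (Or.inr ⟨rfl, hp⟩)
      · have hγv : ¬ (rAct v (rneg (rAct v⁻¹ α))).IsPos := by
          rw [rAct_rneg, rAct_rAct_inv]; exact not_isPos_rneg hpos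
        have hnint := hcond _ (isPos_rneg_of_not hp) hγv
        intro hisnat
        apply hnint
        obtain ⟨t, ht⟩ := hisnat
        rw [apair_zero] at ht
        exact ⟨(t : ℤ), by push_cast; rw [rpair_rneg]; exact ht⟩
/-- Let `λ ∈ Pr̄_k` and `μ ∈ W·λ`.  Then `μ ∈ Pr̄_k` if and only
if `μ = w⁻¹·λ` for some `w ∈ W^λ = {w : Δ₊ ∩ w(-Δ₊) ⊆ Δ₊ \ Δ(λ)}`. -/
theorem statement1 (n : ℕ) (hn : 0 < n) (k : ℚ) (hk : IsAdmissible n k)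
    (lam mu : Weight n) (hlam : lam ∈ Pr n k)
    (hmu : ∃ w : Weyl n, mu = dot w lam) :
    mu ∈ Pr n k ↔ ∃ w ∈ WSet (fIntegral lam), mu = dot w⁻¹ lam := by
  obtain ⟨v, hv⟩ := hmu
  obtain ⟨⟨hRdlam, hSpan⟩, w0, η0, hstruct⟩ := hlam
  subst hv
  constructor
  · rintro ⟨⟨hRdmu, -⟩, -⟩
    refine ⟨v⁻¹, ?_, by rw [inv_inv]⟩
    intro α hpos hneg
    rw [inv_inv] at hneg
    exact (rd_dot_iff k lam hRdlam v).1 hRdmu α hpos hneg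
  · rintro ⟨w, hw, hmu'⟩
    rw [hmu']
    refine ⟨⟨(rd_dot_iff k lam hRdlam w⁻¹).2 hw, spanFull_dot k w⁻¹ lam hSpan⟩,
      w⁻¹ * w0, η0, ?_⟩
    rw [aIntegral_dot, hstruct]
    simp only [Set.image_image, aAct_aAct]

end

end PaperSL
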